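/- arXiv:1502.06299 — 2 statements merged into one kernel-verified Lean document; each statement's English description precedes it below -/
import Mathlib

section
/- Let z1, z2 be points in the closed unit disk of ℂ and for t ∈ (0,1] define X_t(z) = z/|z| if |z| ≥ t and X_t(z) = 0 if |z| < t. Then ∫₀¹ |X_√t(z1) - X_√t(z2)| dt ≤ (3/2) |z1 - z2| (|z1| + |z2|). -/
/-- The cut-off radial projection `X_t` on the closed unit disk. -/
noncomputable def X (t : ℝ) (z : ℂ) : ℂ := if t ≤ ‖z‖ then z / (‖z‖ : ℂ) else 0

lemma normsq (w : ℂ) : ‖w‖ ^ 2 = w.re ^ 2 + w.im ^ 2 := by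
  rw [Complex.sq_norm, Complex.normSq_apply]; ring

lemma key (z1 z2 : ℂ) (hr : ‖z2‖ ≤ ‖z1‖) :
    ‖z2‖ * ‖z1 / (‖z1‖ : ℂ) - z2 / (‖z2‖ : ℂ)‖ ≤ ‖z1 - z2‖ := by
  rcases eq_or_ne z2 0 with h2 | h2
  · simp [h2]
  have hr2 : 0 < ‖z2‖ := norm_pos_iff.2 h2
  have hr1 : 0 < ‖z1‖ := lt_of_lt_of_le hr2 hr
  have hne1 : ‖z1‖ ≠ 0 := hr1.ne'
  have hne2 : ‖z2‖ ≠ 0 := hr2.ne'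
  have hPre : z1.re * z2.re + z1.im * z2.im ≤ ‖z1‖ * ‖z2‖ := by
    have h := Complex.re_le_norm (z1 * (starRingEnd ℂ) z2)
    rw [norm_mul, Complex.norm_conj] at h
    have h' : (z1 * (starRingEnd ℂ) z2).re = z1.re * z2.re + z1.im * z2.im := by
      simp [Complex.mul_re]
    rw [h'] at h
    exact h
  have hz1 : (‖z1‖ : ℂ) ≠ 0 := by exact_mod_cast hne1
  have hz2 : (‖z2‖ : ℂ) ≠ 0 := by exact_mod_cast hne2
  have t2 : (‖z2‖ : ℂ) * (z2 / (‖z2‖ : ℂ)) = z2 := by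
    rw [mul_comm, div_mul_cancel₀ _ hz2]
  have hrw : (‖z2‖ : ℂ) * (z1 / (‖z1‖ : ℂ) - z2 / (‖z2‖ : ℂ))
      = ((‖z2‖ / ‖z1‖ : ℝ) : ℂ) * z1 - z2 := by
    rw [mul_sub, t2]
    push_cast
    ring
  have hL : ‖z2‖ * ‖z1 / (‖z1‖ : ℂ) - z2 / (‖z2‖ : ℂ)‖
      = ‖((‖z2‖ / ‖z1‖ : ℝ) : ℂ) * z1 - z2‖ := by
    rw [← hrw, norm_mul]
    simp [abs_of_nonneg hr2.le]
  rw [hL]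
  have hsq : ‖((‖z2‖ / ‖z1‖ : ℝ) : ℂ) * z1 - z2‖ ^ 2 ≤ ‖z1 - z2‖ ^ 2 := by
    rw [normsq, normsq]
    simp only [Complex.sub_re, Complex.sub_im, Complex.mul_re, Complex.mul_im,
      Complex.ofReal_re, Complex.ofReal_im]
    have n1 := normsq z1
    have n2 := normsq z2
    have h5 : 0 ≤ ‖z1‖ * (‖z1‖ + ‖z2‖) - 2 * (z1.re * z2.re + z1.im * z2.im) := by
      nlinarith [hPre, mul_nonneg hr1.le (sub_nonneg.2 hr)]
    have h6 : 0 ≤ ‖z1‖ * (‖z1‖ - ‖z2‖) *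
        (‖z1‖ * (‖z1‖ + ‖z2‖) - 2 * (z1.re * z2.re + z1.im * z2.im)) :=
      mul_nonneg (mul_nonneg hr1.le (sub_nonneg.2 hr)) h5
    have key2 : (‖z2‖ * z1.re - ‖z1‖ * z2.re) ^ 2 + (‖z2‖ * z1.im - ‖z1‖ * z2.im) ^ 2
        ≤ ‖z1‖ ^ 2 * ((z1.re - z2.re) ^ 2 + (z1.im - z2.im) ^ 2) := by
      nlinarith [h6, n1, n2]
    have goal2 : (‖z2‖ / ‖z1‖ * z1.re - 0 * z1.im - z2.re) ^ 2 +
        (‖z2‖ / ‖z1‖ * z1.im + 0 * z1.re - z2.im) ^ 2 =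
        ((‖z2‖ * z1.re - ‖z1‖ * z2.re) ^ 2 + (‖z2‖ * z1.im - ‖z1‖ * z2.im) ^ 2) / ‖z1‖ ^ 2 := by
      have habs : ‖z1‖ ≠ 0 := hne1
      field_simp
      ring
    rw [goal2, div_le_iff₀ (by positivity)]
    nlinarith [key2]
  have h7 := Real.sqrt_le_sqrt hsq
  rwa [Real.sqrt_sq (norm_nonneg _), Real.sqrt_sq (norm_nonneg _)] at h7


lemma aux (z1 z2 : ℂ) (h1 : ‖z1‖ ≤ 1) (hr : ‖z2‖ ≤ ‖z1‖) :
    (∫ t in (0:ℝ)..1, ‖X (Real.sqrt t) z1 - X (Real.sqrt t) z2‖) ≤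
      3 / 2 * ‖z1 - z2‖ * (‖z1‖ + ‖z2‖) := by
  set F : ℝ → ℝ := fun t => ‖X (Real.sqrt t) z1 - X (Real.sqrt t) z2‖ with hF
  have h20 : (0:ℝ) ≤ ‖z2‖ := norm_nonneg _
  have h10 : (0:ℝ) ≤ ‖z1‖ := norm_nonneg _
  set c : ℝ := ‖z1 / (‖z1‖ : ℂ) - z2 / (‖z2‖ : ℂ)‖ with hc
  -- piecewise values
  have hA : ∀ t ∈ Set.Ioc (0:ℝ) (‖z2‖^2), F t = c := by
    intro t ht
    have hst2 : Real.sqrt t ≤ ‖z2‖ := by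
      calc Real.sqrt t ≤ Real.sqrt (‖z2‖^2) := Real.sqrt_le_sqrt ht.2
        _ = ‖z2‖ := Real.sqrt_sq h20
    have hst1 : Real.sqrt t ≤ ‖z1‖ := hst2.trans hr
    simp only [hF, X, if_pos hst1, if_pos hst2, hc]
  have hB : ∀ t ∈ Set.Ioc (‖z2‖^2) (‖z1‖^2), F t = 1 := by
    intro t ht
    have hst2 : ‖z2‖ < Real.sqrt t := (Real.lt_sqrt h20).2 ht.1
    have hst1 : Real.sqrt t ≤ ‖z1‖ := by
      calc Real.sqrt t ≤ Real.sqrt (‖z1‖^2) := Real.sqrt_le_sqrt ht.2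
        _ = ‖z1‖ := Real.sqrt_sq h10
    have hz1pos : 0 < ‖z1‖ := (h20.trans_lt hst2).trans_le hst1
    simp only [hF, X, if_pos hst1, if_neg (not_le.2 hst2), sub_zero, norm_div,
      Complex.norm_real, Real.norm_eq_abs, abs_of_nonneg h10]
    exact div_self hz1pos.ne'
  have hC : ∀ t ∈ Set.Ioc (‖z1‖^2) (1:ℝ), F t = 0 := by
    intro t ht
    have hst1 : ‖z1‖ < Real.sqrt t := (Real.lt_sqrt h10).2 ht.1
    have hst2 : ‖z2‖ < Real.sqrt t := lt_of_le_of_lt hr hst1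
    simp only [hF, X, if_neg (not_le.2 hst1), if_neg (not_le.2 hst2), sub_zero, norm_zero]
  have hle1 : (0:ℝ) ≤ ‖z2‖^2 := by positivity
  have hle2 : ‖z2‖^2 ≤ ‖z1‖^2 := by nlinarith
  have hle3 : ‖z1‖^2 ≤ 1 := by nlinarith
  have hI1 : IntervalIntegrable F MeasureTheory.volume 0 (‖z2‖^2) := by
    rw [intervalIntegrable_iff_integrableOn_Ioc_of_le hle1]
    exact (MeasureTheory.integrableOn_const measure_Ioc_lt_top.ne enorm_ne_top).congr_fun
      (fun t ht => (hA t ht).symm) measurableSet_Ioc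
  have hI2 : IntervalIntegrable F MeasureTheory.volume (‖z2‖^2) (‖z1‖^2) := by
    rw [intervalIntegrable_iff_integrableOn_Ioc_of_le hle2]
    exact (MeasureTheory.integrableOn_const measure_Ioc_lt_top.ne enorm_ne_top).congr_fun
      (fun t ht => (hB t ht).symm) measurableSet_Ioc
  have hI3 : IntervalIntegrable F MeasureTheory.volume (‖z1‖^2) 1 := by
    rw [intervalIntegrable_iff_integrableOn_Ioc_of_le hle3]
    exact (MeasureTheory.integrableOn_const measure_Ioc_lt_top.ne enorm_ne_top).congr_fun
      (fun t ht => (hC t ht).symm) measurableSet_Ioc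
  have hv1 : (∫ t in (0:ℝ)..(‖z2‖^2), F t) = ‖z2‖^2 * c := by
    rw [intervalIntegral.integral_of_le hle1,
      MeasureTheory.setIntegral_congr_fun measurableSet_Ioc hA,
      MeasureTheory.setIntegral_const, Real.volume_real_Ioc, sub_zero,
      max_eq_left hle1, smul_eq_mul]
  have hv2 : (∫ t in (‖z2‖^2)..(‖z1‖^2), F t) = ‖z1‖^2 - ‖z2‖^2 := by
    rw [intervalIntegral.integral_of_le hle2,
      MeasureTheory.setIntegral_congr_fun measurableSet_Ioc hB,
      MeasureTheory.setIntegral_const, Real.volume_real_Ioc,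
      max_eq_left (sub_nonneg.2 hle2), smul_eq_mul, mul_one]
  have hv3 : (∫ t in (‖z1‖^2)..(1:ℝ), F t) = 0 := by
    rw [intervalIntegral.integral_of_le hle3,
      MeasureTheory.setIntegral_congr_fun measurableSet_Ioc hC]
    simp
  have split : (∫ t in (0:ℝ)..1, F t)
      = (∫ t in (0:ℝ)..(‖z2‖^2), F t) + (∫ t in (‖z2‖^2)..(‖z1‖^2), F t)
        + (∫ t in (‖z1‖^2)..(1:ℝ), F t) := by
    rw [intervalIntegral.integral_add_adjacent_intervals hI1 hI2,
      intervalIntegral.integral_add_adjacent_intervals (hI1.trans hI2) hI3]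
  rw [split, hv1, hv2, hv3]
  have hkey := key z1 z2 hr
  have hd : ‖z1‖ - ‖z2‖ ≤ ‖z1 - z2‖ := norm_sub_norm_le z1 z2
  have hd0 : (0:ℝ) ≤ ‖z1 - z2‖ := norm_nonneg _
  have hc0 : (0:ℝ) ≤ c := norm_nonneg _
  nlinarith [mul_le_mul_of_nonneg_left hkey h20,
    mul_le_mul_of_nonneg_right hd (by positivity : (0:ℝ) ≤ ‖z1‖ + ‖z2‖),
    mul_nonneg hd0 (sub_nonneg.2 hr)]

theorem stmt_2 (z1 z2 : ℂ) (h1 : ‖z1‖ ≤ 1) (h2 : ‖z2‖ ≤ 1) :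
    (∫ t in (0:ℝ)..1, ‖X (Real.sqrt t) z1 - X (Real.sqrt t) z2‖) ≤
      3 / 2 * ‖z1 - z2‖ * (‖z1‖ + ‖z2‖) := by
  rcases le_total ‖z2‖ ‖z1‖ with hr | hr
  · exact aux z1 z2 h1 hr
  · have hsym : ∀ t : ℝ, ‖X (Real.sqrt t) z1 - X (Real.sqrt t) z2‖
        = ‖X (Real.sqrt t) z2 - X (Real.sqrt t) z1‖ := fun t => norm_sub_rev _ _
    simp_rw [hsym]
    rw [norm_sub_rev z1 z2, add_comm ‖z1‖ ‖z2‖]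
    exact aux z2 z1 h2 hr
end

section
/- Let k ∈ ℕ, ξ = e^{2πi/k}, and for θ ∈ [0,2π), t ∈ (0,1], define Y_{t,θ}(z) = ξ^j if z lies in the sector Q_j^θ = { re^{iα} : 0 < r ≤ 1, θ + 2πj/k ≤ α < θ + 2π(j+1)/k } and |z| ≥ t, and Y_{t,θ}(z) = 0 if |z| < t. Then for any z1, z2 in the closed unit disk, (1/2π) ∫₀^{2π} ∫₀¹ |Y_{√t,θ}(z1) - Y_{√t,θ}(z2)| dt dθ ≤ 2 |z1 - z2| (|z1| + |z2|). -/
open Real intervalIntegral MeasureTheory Set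

/-- The random `k`-partition function `Y_{t,θ}` on the closed unit disk:
`Y t θ z = ξ^j` if `|z| ≥ t` and `z` lies in the sector `Q_j^θ`
(i.e. `θ + 2πj/k ≤ arg z < θ + 2π(j+1)/k` mod `2π`), and `0` if `|z| < t`. -/
noncomputable def Y (k : ℕ) (t θ : ℝ) (z : ℂ) : ℂ :=
  if ‖z‖ < t then 0
  else Complex.exp (2 * Real.pi * Complex.I / k) ^
    ⌊(k : ℝ) * Int.fract ((Complex.arg z - θ) / (2 * Real.pi))⌋

noncomputable def xi (k : ℕ) : ℂ := Complex.exp (2 * Real.pi * Complex.I / k)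

lemma xi_ne_zero (k : ℕ) : xi k ≠ 0 := Complex.exp_ne_zero _

lemma norm_xi_zpow (k : ℕ) (n : ℤ) : ‖xi k ^ n‖ = 1 := by
  rw [norm_zpow]
  have : ‖xi k‖ = 1 := by
    unfold xi
    rw [Complex.norm_exp]
    have : (2 * (Real.pi:ℂ) * Complex.I / (k:ℕ)).re = 0 := by
      simp [Complex.div_re]
    rw [this, Real.exp_zero]
  rw [this, one_zpow]

lemma xi_pow_k (k : ℕ) (hk : k ≠ 0) : xi k ^ (k : ℤ) = 1 := by
  unfold xi
  rw [← Complex.exp_int_mul]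
  have hkc : (k:ℂ) ≠ 0 := Nat.cast_ne_zero.2 hk
  rw [show ((k:ℤ):ℂ) * (2 * (Real.pi:ℂ) * Complex.I / k) = 2 * Real.pi * Complex.I by
    field_simp; norm_cast]
  exact Complex.exp_two_pi_mul_I

lemma norm_exp_mul_I_sub_one (y : ℝ) : ‖Complex.exp (y * Complex.I) - 1‖ = 2 * |Real.sin (y/2)| := by
  have h1 : Complex.exp (y * Complex.I) - 1 = Complex.mk (Real.cos y - 1) (Real.sin y) := by
    apply Complex.ext <;>
      simp [Complex.exp_ofReal_mul_I_re, Complex.exp_ofReal_mul_I_im]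
  rw [h1, Complex.norm_def]
  rw [show (2 * |Real.sin (y/2)|) = Real.sqrt ((2 * |Real.sin (y/2)|)^2) from
    (Real.sqrt_sq (by positivity)).symm]
  congr 1
  have hc := Real.cos_two_mul' (y/2)
  have hs := Real.sin_sq_add_cos_sq (y/2)
  rw [show 2 * (y/2) = y by ring] at hc
  have hc2 := Real.sin_sq_add_cos_sq y
  simp only [Complex.normSq_mk]
  rw [mul_pow, sq_abs]
  nlinarith

lemma norm_xi_zpow_sub_xi_zpow (k : ℕ) (hk : k ≠ 0) (m n : ℤ) :
    ‖xi k ^ m - xi k ^ n‖ = 2 * |Real.sin (Real.pi * ((m:ℝ) - n) / k)| := by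
  have hfac : xi k ^ m - xi k ^ n = xi k ^ n * (xi k ^ (m - n) - 1) := by
    rw [mul_sub, ← zpow_add₀ (xi_ne_zero k), mul_one]
    ring_nf
  rw [hfac, norm_mul, norm_xi_zpow, one_mul]
  have : xi k ^ (m - n) = Complex.exp ((2 * Real.pi * ((m:ℝ) - n) / k : ℝ) * Complex.I) := by
    unfold xi
    rw [← Complex.exp_int_mul]
    congr 1
    push_cast
    have hkc : (k:ℂ) ≠ 0 := Nat.cast_ne_zero.2 hk
    field_simp
  rw [this, norm_exp_mul_I_sub_one]
  congr 2
  ring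

lemma norm_sub_xi_zpow_sub_one (k : ℕ) (m n : ℤ) :
    ‖xi k ^ (m - 1) - xi k ^ (n - 1)‖ = ‖xi k ^ m - xi k ^ n‖ := by
  have : xi k ^ (m - 1) - xi k ^ (n - 1) = (xi k ^ m - xi k ^ n) * (xi k)⁻¹ := by
    rw [sub_mul, ← zpow_sub_one₀ (xi_ne_zero k), ← zpow_sub_one₀ (xi_ne_zero k)]
  rw [this, norm_mul, norm_inv]
  have h1 : ‖xi k‖ = 1 := by simpa using norm_xi_zpow k 1
  rw [h1]; norm_num

lemma key_aux (K : ℝ) (hK : 2 ≤ K) (j : ℤ) (d : ℝ) (hd0 : 0 ≤ d) (hd1 : d ≤ 1)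
    (h0 : 0 ≤ (j:ℝ) - d) (h2 : (j:ℝ) - d ≤ K/2) :
    (1-d) * |Real.sin (Real.pi * j / K)| + d * |Real.sin (Real.pi * ((j:ℝ)-1) / K)| ≤
      |Real.sin (Real.pi * ((j:ℝ)-d) / K)| := by
  have hKpos : (0:ℝ) < K := by linarith
  rcases eq_or_lt_of_le hd0 with hd | hd
  · rw [← hd]
    norm_num
  · have hj1 : 1 ≤ (j:ℝ) := by
      have : (0:ℝ) < j := by linarith
      exact_mod_cast this
    have hjK : (j:ℝ) ≤ K := by linarith
    have hx1 : 0 ≤ Real.pi * j / K := by positivity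
    have hx2 : Real.pi * j / K ≤ Real.pi := by
      rw [div_le_iff₀ hKpos]
      nlinarith [Real.pi_pos]
    have hy1 : 0 ≤ Real.pi * ((j:ℝ)-1) / K := by
      apply div_nonneg _ hKpos.le
      nlinarith [Real.pi_pos]
    have hy2 : Real.pi * ((j:ℝ)-1) / K ≤ Real.pi := by
      rw [div_le_iff₀ hKpos]
      nlinarith [Real.pi_pos]
    have hz1 : 0 ≤ Real.pi * ((j:ℝ)-d) / K := by positivity
    have hz2 : Real.pi * ((j:ℝ)-d) / K ≤ Real.pi := by
      rw [div_le_iff₀ hKpos]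
      nlinarith [Real.pi_pos]
    rw [abs_of_nonneg (Real.sin_nonneg_of_nonneg_of_le_pi hx1 hx2),
      abs_of_nonneg (Real.sin_nonneg_of_nonneg_of_le_pi hy1 hy2),
      abs_of_nonneg (Real.sin_nonneg_of_nonneg_of_le_pi hz1 hz2)]
    have hcc := strictConcaveOn_sin_Icc.concaveOn.2 (x := Real.pi * j / K)
      (y := Real.pi * ((j:ℝ)-1) / K) ⟨hx1, hx2⟩ ⟨hy1, hy2⟩ (by linarith : (0:ℝ) ≤ 1 - d)
      hd0 (by ring)
    have harg : (1-d) • (Real.pi * j / K) + d • (Real.pi * ((j:ℝ)-1) / K)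
        = Real.pi * ((j:ℝ)-d) / K := by
      simp only [smul_eq_mul]
      field_simp
      ring
    rw [harg] at hcc
    simpa [smul_eq_mul] using hcc

lemma key_s4 (K : ℝ) (hK : 2 ≤ K) (j : ℤ) (d : ℝ) (hd0 : 0 ≤ d) (hd1 : d ≤ 1)
    (hj : |(j:ℝ) - d| ≤ K/2) :
    (1-d) * |Real.sin (Real.pi * j / K)| + d * |Real.sin (Real.pi * ((j:ℝ)-1) / K)| ≤
      |Real.sin (Real.pi * ((j:ℝ)-d) / K)| := by
  rcases le_or_gt 0 ((j:ℝ) - d) with h0 | h0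
  · exact key_aux K hK j d hd0 hd1 h0 ((abs_le.mp hj).2)
  · have h := key_aux K hK (1 - j) (1 - d) (by linarith) (by linarith)
      (by push_cast; linarith) (by push_cast; rw [abs_le] at hj; linarith)
    push_cast at h
    rw [show Real.pi * (1 - (j:ℝ)) / K = -(Real.pi * ((j:ℝ)-1) / K) by ring, Real.sin_neg,
      abs_neg] at h
    rw [show Real.pi * (1 - (j:ℝ) - 1) / K = -(Real.pi * (j:ℝ) / K) by ring, Real.sin_neg,
      abs_neg] at h
    rw [show Real.pi * (1 - (j:ℝ) - (1 - d)) / K = -(Real.pi * ((j:ℝ) - d) / K) by ring,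
      Real.sin_neg, abs_neg] at h
    linarith

noncomputable def hfun (k : ℕ) (a1 a2 : ℝ) (u : ℝ) : ℝ :=
  ‖xi k ^ ⌊a1 - u⌋ - xi k ^ ⌊a2 - u⌋‖

lemma hfun_meas (k : ℕ) (a1 a2 : ℝ) : Measurable (hfun k a1 a2) := by
  unfold hfun
  apply Measurable.norm
  apply Measurable.sub <;>
  · apply Measurable.of_discrete.comp (Measurable.floor ?_)
    exact measurable_const.sub measurable_id

lemma hfun_nonneg (k : ℕ) (a1 a2 : ℝ) (u : ℝ) : 0 ≤ hfun k a1 a2 u := norm_nonneg _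

lemma hfun_le (k : ℕ) (a1 a2 : ℝ) (u : ℝ) : hfun k a1 a2 u ≤ 2 := by
  unfold hfun
  calc ‖xi k ^ ⌊a1 - u⌋ - xi k ^ ⌊a2 - u⌋‖ ≤ ‖xi k ^ ⌊a1 - u⌋‖ + ‖xi k ^ ⌊a2 - u⌋‖ :=
        norm_sub_le _ _
    _ = 2 := by rw [norm_xi_zpow, norm_xi_zpow]; norm_num

lemma hfun_intInt (k : ℕ) (a1 a2 : ℝ) (t1 t2 : ℝ) :
    IntervalIntegrable (hfun k a1 a2) MeasureSpace.volume t1 t2 := by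
  rw [intervalIntegrable_iff]
  haveI : IsFiniteMeasure (MeasureSpace.volume.restrict (Set.uIoc t1 t2)) := by
    constructor
    rw [MeasureTheory.Measure.restrict_apply_univ, Set.uIoc, Real.volume_Ioc]
    exact ENNReal.ofReal_lt_top
  apply MeasureTheory.Integrable.mono' (g := fun _ => (2:ℝ))
    (MeasureTheory.integrable_const _)
    ((hfun_meas k a1 a2).aestronglyMeasurable.restrict)
  filter_upwards with u
  rw [Real.norm_eq_abs, abs_of_nonneg (hfun_nonneg k a1 a2 u)]
  exact hfun_le k a1 a2 u

lemma hfun_periodic (k : ℕ) (a1 a2 : ℝ) : Function.Periodic (hfun k a1 a2) 1 := by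
  intro u
  unfold hfun
  have h1 : ∀ a : ℝ, ⌊a - (u + 1)⌋ = ⌊a - u⌋ - 1 := by
    intro a
    rw [show a - (u + 1) = (a - u) - (1:ℤ) by push_cast; ring, Int.floor_sub_intCast]
  rw [h1, h1, norm_sub_xi_zpow_sub_one]

lemma abs_sin_add_int_mul_pi (x : ℝ) (q : ℤ) : |Real.sin (x + q * Real.pi)| = |Real.sin x| := by
  rw [Real.sin_add_int_mul_pi, abs_mul]
  have : |((-1:ℝ) ^ q)| = 1 := by
    rcases Int.even_or_odd q with h | h
    · rw [h.neg_one_zpow]; norm_num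
    · rw [h.neg_one_zpow]; norm_num
  rw [this, one_mul]

set_option maxHeartbeats 2000000 in
lemma integral_hfun_le_aux (k : ℕ) (hk : 2 ≤ k) (a1 a2 : ℝ)
    (hf : Int.fract a1 ≤ Int.fract a2) :
    ∫ u in (0:ℝ)..1, hfun k a1 a2 u ≤ 2 * |Real.sin (Real.pi * (a1 - a2) / k)| := by
  have hk0 : k ≠ 0 := by omega
  have hkR : (0:ℝ) < k := by exact_mod_cast Nat.pos_of_ne_zero hk0
  have hkR0 : (k:ℝ) ≠ 0 := ne_of_gt hkR
  set n1 := ⌊a1⌋ with hn1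
  set n2 := ⌊a2⌋ with hn2
  set f1 := Int.fract a1 with hf1
  set f2 := Int.fract a2 with hf2
  have hf10 : 0 ≤ f1 := Int.fract_nonneg a1
  have hf20 : 0 ≤ f2 := Int.fract_nonneg a2
  have hf11 : f1 < 1 := Int.fract_lt_one a1
  have hf21 : f2 < 1 := Int.fract_lt_one a2
  have ha1 : a1 = n1 + f1 := by rw [hn1, hf1, Int.floor_add_fract]
  have ha2 : a2 = n2 + f2 := by rw [hn2, hf2, Int.floor_add_fract]
  -- split the integral
  have hsplit : ∫ u in (0:ℝ)..1, hfun k a1 a2 u =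
      (∫ u in (0:ℝ)..f1, hfun k a1 a2 u) + (∫ u in f1..f2, hfun k a1 a2 u) +
      (∫ u in f2..(1:ℝ), hfun k a1 a2 u) := by
    rw [integral_add_adjacent_intervals (hfun_intInt k a1 a2 0 f1) (hfun_intInt k a1 a2 f1 f2),
      integral_add_adjacent_intervals (hfun_intInt k a1 a2 0 f2) (hfun_intInt k a1 a2 f2 1)]
  have hP1 : ∫ u in (0:ℝ)..f1, hfun k a1 a2 u = f1 * ‖xi k ^ n1 - xi k ^ n2‖ := by
    rw [integral_congr (g := fun _ => ‖xi k ^ n1 - xi k ^ n2‖), intervalIntegral.integral_const,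
      smul_eq_mul, sub_zero]
    intro u hu
    rw [Set.uIcc_of_le hf10] at hu
    obtain ⟨hu0, hu1⟩ := hu
    unfold hfun
    have e1 : ⌊a1 - u⌋ = n1 := by
      rw [Int.floor_eq_iff]
      constructor <;> push_cast <;> linarith
    have e2 : ⌊a2 - u⌋ = n2 := by
      rw [Int.floor_eq_iff]
      constructor <;> push_cast <;> linarith
    rw [e1, e2]
  have hP2 : ∫ u in f1..f2, hfun k a1 a2 u = (f2 - f1) * ‖xi k ^ (n1 - 1) - xi k ^ n2‖ := by
    rw [intervalIntegral.integral_congr_ae (g := fun _ => ‖xi k ^ (n1 - 1) - xi k ^ n2‖)]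
    · rw [intervalIntegral.integral_const, smul_eq_mul]
    filter_upwards with u hu
    rw [Set.uIoc_of_le hf] at hu
    obtain ⟨hu0, hu1⟩ := hu
    unfold hfun
    have e1 : ⌊a1 - u⌋ = n1 - 1 := by
      rw [Int.floor_eq_iff]
      constructor <;> push_cast <;> linarith
    have e2 : ⌊a2 - u⌋ = n2 := by
      rw [Int.floor_eq_iff]
      constructor <;> push_cast <;> linarith
    rw [e1, e2]
  have hP3 : ∫ u in f2..(1:ℝ), hfun k a1 a2 u = (1 - f2) * ‖xi k ^ n1 - xi k ^ n2‖ := by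
    rw [intervalIntegral.integral_congr_ae (g := fun _ => ‖xi k ^ (n1 - 1) - xi k ^ (n2 - 1)‖)]
    · rw [intervalIntegral.integral_const, smul_eq_mul, norm_sub_xi_zpow_sub_one]
    filter_upwards with u hu
    rw [Set.uIoc_of_le hf21.le] at hu
    obtain ⟨hu0, hu1⟩ := hu
    unfold hfun
    have e1 : ⌊a1 - u⌋ = n1 - 1 := by
      rw [Int.floor_eq_iff]
      constructor <;> push_cast <;> linarith
    have e2 : ⌊a2 - u⌋ = n2 - 1 := by
      rw [Int.floor_eq_iff]
      constructor <;> push_cast <;> linarith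
    rw [e1, e2]
  rw [hsplit, hP1, hP2, hP3]
  clear hsplit hP1 hP2 hP3
  -- now the arithmetic bound
  set d := f2 - f1 with hd
  set m := n1 - n2 with hm
  set q := round ((a1 - a2) / (k:ℝ)) with hq
  set j := m - (k:ℤ) * q with hj
  have hjr : (j:ℝ) = (m:ℝ) - (k:ℝ) * q := by push_cast [hj]; ring
  have hmd : (m:ℝ) - d = a1 - a2 := by
    rw [ha1, ha2]; push_cast [hm, hd]; ring
  have hround := abs_sub_round ((a1 - a2) / (k:ℝ))
  have hkey := key_s4 (k:ℝ) (by exact_mod_cast hk) j d (by linarith) (by linarith)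
    (by
      rw [show (j:ℝ) - d = ((a1 - a2) / (k:ℝ) - q) * k by
        rw [hjr]; field_simp; linarith [hmd]]
      rw [abs_mul, abs_of_pos hkR]
      calc |(a1 - a2) / (k:ℝ) - q| * k ≤ (1/2) * k := by
            apply mul_le_mul_of_nonneg_right hround hkR.le
        _ = k / 2 := by ring)
  have c0eq : ‖xi k ^ n1 - xi k ^ n2‖ = 2 * |Real.sin (Real.pi * (j:ℝ) / k)| := by
    rw [norm_xi_zpow_sub_xi_zpow k hk0]
    congr 1
    rw [show Real.pi * ((n1:ℝ) - n2) / k = Real.pi * (j:ℝ) / k + q * Real.pi by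
      rw [hjr]; push_cast [hm]; field_simp; ring]
    rw [abs_sin_add_int_mul_pi]
  have c1eq : ‖xi k ^ (n1 - 1) - xi k ^ n2‖ = 2 * |Real.sin (Real.pi * ((j:ℝ) - 1) / k)| := by
    rw [norm_xi_zpow_sub_xi_zpow k hk0]
    congr 1
    rw [show Real.pi * (((n1 - 1 : ℤ):ℝ) - n2) / k = Real.pi * ((j:ℝ) - 1) / k + q * Real.pi by
      rw [hjr]; push_cast [hm]; field_simp; ring]
    rw [abs_sin_add_int_mul_pi]
  have crhs : |Real.sin (Real.pi * (a1 - a2) / k)| = |Real.sin (Real.pi * ((j:ℝ) - d) / k)| := by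
    rw [show Real.pi * (a1 - a2) / k = Real.pi * ((j:ℝ) - d) / k + q * Real.pi by
      rw [hjr, ← hmd]; field_simp; ring]
    rw [abs_sin_add_int_mul_pi]
  rw [c0eq, c1eq, crhs]
  nlinarith [hkey]

lemma integral_hfun_le (k : ℕ) (hk : 1 ≤ k) (a1 a2 : ℝ) :
    ∫ u in (0:ℝ)..1, hfun k a1 a2 u ≤ 2 * |Real.sin (Real.pi * (a1 - a2) / k)| := by
  rcases eq_or_lt_of_le hk with hk1 | hk2
  · -- k = 1 : xi 1 = 1 and hfun vanishes
    have hxi : xi k = 1 := by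
      unfold xi
      rw [← hk1]
      push_cast
      rw [div_one]
      exact Complex.exp_two_pi_mul_I
    have : ∀ u, hfun k a1 a2 u = 0 := by
      intro u
      unfold hfun
      rw [hxi, one_zpow, one_zpow, sub_self, norm_zero]
    rw [intervalIntegral.integral_congr (g := fun _ => (0:ℝ)) (fun u _ => this u)]
    simp

  · have hk2' : 2 ≤ k := hk2
    rcases le_total (Int.fract a1) (Int.fract a2) with hf | hf
    · exact integral_hfun_le_aux k hk2' a1 a2 hf
    · have h := integral_hfun_le_aux k hk2' a2 a1 hf
      have heq : ∀ u, hfun k a2 a1 u = hfun k a1 a2 u := by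
        intro u; unfold hfun; rw [norm_sub_rev]
      simp_rw [heq] at h
      rw [show Real.pi * (a2 - a1) / k = -(Real.pi * (a1 - a2) / k) by ring, Real.sin_neg,
        abs_neg] at h
      exact h

noncomputable def wfun (k : ℕ) (θ : ℝ) (z : ℂ) : ℂ :=
  xi k ^ ⌊(k : ℝ) * Int.fract ((Complex.arg z - θ) / (2 * Real.pi))⌋

lemma wfun_eq (k : ℕ) (hk : k ≠ 0) (θ : ℝ) (z : ℂ) :
    wfun k θ z = xi k ^ ⌊(k:ℝ) * Complex.arg z / (2 * Real.pi) - (k:ℝ) * θ / (2 * Real.pi)⌋ := by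
  unfold wfun
  set x := (Complex.arg z - θ) / (2 * Real.pi) with hx
  have h1 : (k:ℝ) * Int.fract x = (k:ℝ) * x - (((k:ℤ) * ⌊x⌋ : ℤ) : ℝ) := by
    rw [Int.fract]
    push_cast
    ring
  have h2 : ⌊(k:ℝ) * Int.fract x⌋ = ⌊(k:ℝ) * x⌋ - (k:ℤ) * ⌊x⌋ := by
    rw [h1, Int.floor_sub_intCast]
  rw [h2, zpow_sub₀ (xi_ne_zero k), zpow_mul, xi_pow_k k hk, one_zpow, div_one]
  congr 1
  rw [hx]
  ring

lemma wnorm_eq_hfun (k : ℕ) (hk : k ≠ 0) (z1 z2 : ℂ) (θ : ℝ) :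
    ‖wfun k θ z1 - wfun k θ z2‖ =
      hfun k ((k:ℝ) * Complex.arg z1 / (2 * Real.pi)) ((k:ℝ) * Complex.arg z2 / (2 * Real.pi))
        ((k:ℝ) / (2 * Real.pi) * θ) := by
  unfold hfun
  rw [wfun_eq k hk θ z1, wfun_eq k hk θ z2]
  congr 3 <;> ring

lemma integral_wnorm (k : ℕ) (hk : 1 ≤ k) (z1 z2 : ℂ) :
    ∫ θ in (0:ℝ)..(2 * Real.pi), ‖wfun k θ z1 - wfun k θ z2‖ =
      2 * Real.pi * ∫ u in (0:ℝ)..1,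
        hfun k ((k:ℝ) * Complex.arg z1 / (2 * Real.pi)) ((k:ℝ) * Complex.arg z2 / (2 * Real.pi)) u := by
  have hk0 : k ≠ 0 := by omega
  have hkR : (0:ℝ) < k := by exact_mod_cast Nat.pos_of_ne_zero hk0
  have hpi := Real.pi_pos
  set a1 := (k:ℝ) * Complex.arg z1 / (2 * Real.pi)
  set a2 := (k:ℝ) * Complex.arg z2 / (2 * Real.pi)
  have hc : (k:ℝ) / (2 * Real.pi) ≠ 0 := by positivity
  rw [integral_congr (g := fun θ => hfun k a1 a2 ((k:ℝ) / (2 * Real.pi) * θ))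
    (fun θ _ => wnorm_eq_hfun k hk0 z1 z2 θ)]
  rw [integral_comp_mul_left (hfun k a1 a2) hc, mul_zero,
    show (k:ℝ) / (2 * Real.pi) * (2 * Real.pi) = (k:ℝ) by field_simp]
  have hper := (hfun_periodic k a1 a2).intervalIntegral_add_zsmul_eq (k:ℤ) 0
    (hfun_intInt k a1 a2)
  have e1 : (0:ℝ) + (k:ℤ) • (1:ℝ) = (k:ℝ) := by push_cast [zsmul_eq_mul]; ring
  have e2 : (0:ℝ) + (1:ℝ) = 1 := by norm_num
  rw [e1, e2] at hper
  rw [hper, zsmul_eq_mul, smul_eq_mul]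
  push_cast
  field_simp

lemma re_mul_conj (r1 r2 phi1 phi2 : ℝ) :
    (((r1:ℂ) * Complex.exp (phi1 * Complex.I)) *
      (starRingEnd ℂ) ((r2:ℂ) * Complex.exp (phi2 * Complex.I))).re
      = r1 * r2 * Real.cos (phi1 - phi2) := by
  rw [map_mul, ← Complex.exp_conj, map_mul, Complex.conj_I, Complex.conj_ofReal, Complex.conj_ofReal]
  rw [show (r1:ℂ) * Complex.exp (↑phi1 * Complex.I) * (↑r2 * Complex.exp (↑phi2 * -Complex.I))
      = ((r1*r2 : ℝ):ℂ) * Complex.exp (↑phi1 * Complex.I + ↑phi2 * -Complex.I) by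
    rw [Complex.exp_add]; push_cast; ring]
  rw [show (↑phi1 * Complex.I + ↑phi2 * -Complex.I) = ((phi1 - phi2 : ℝ):ℂ) * Complex.I by
    push_cast; ring]
  rw [Complex.re_ofReal_mul, Complex.exp_ofReal_mul_I_re]

lemma chord (z1 z2 : ℂ) :
    4 * (‖z1‖ * ‖z2‖) * Real.sin ((Complex.arg z1 - Complex.arg z2)/2)^2 ≤ ‖z1 - z2‖^2 := by
  have e1 := Complex.norm_mul_exp_arg_mul_I z1
  have e2 := Complex.norm_mul_exp_arg_mul_I z2
  have h1 : (z1 * (starRingEnd ℂ) z2).re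
      = ‖z1‖ * ‖z2‖ * Real.cos (Complex.arg z1 - Complex.arg z2) := by
    conv_lhs => rw [← e1, ← e2]
    exact re_mul_conj _ _ _ _
  have h2 : ‖z1 - z2‖^2 = ‖z1‖^2 + ‖z2‖^2 -
      2 * (‖z1‖ * ‖z2‖ * Real.cos (Complex.arg z1 - Complex.arg z2)) := by
    rw [← h1]
    rw [Complex.sq_norm,
      Complex.sq_norm, Complex.sq_norm, Complex.normSq_sub]
  set δ := Complex.arg z1 - Complex.arg z2
  have hc := Real.cos_two_mul' (δ/2)
  rw [show 2 * (δ/2) = δ by ring] at hc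
  have hs := Real.sin_sq_add_cos_sq (δ/2)
  have hr1 : 0 ≤ ‖z1‖ := norm_nonneg _
  have hr2 : 0 ≤ ‖z2‖ := norm_nonneg _
  nlinarith [sq_nonneg (‖z1‖ - ‖z2‖)]

lemma norm_wfun (k : ℕ) (θ : ℝ) (z : ℂ) : ‖wfun k θ z‖ = 1 := norm_xi_zpow k _

lemma wnorm_le (k : ℕ) (θ : ℝ) (z1 z2 : ℂ) : ‖wfun k θ z1 - wfun k θ z2‖ ≤ 2 := by
  calc ‖wfun k θ z1 - wfun k θ z2‖ ≤ ‖wfun k θ z1‖ + ‖wfun k θ z2‖ := norm_sub_le _ _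
    _ = 2 := by rw [norm_wfun, norm_wfun]; norm_num

lemma wnorm_intInt (k : ℕ) (z1 z2 : ℂ) (t1 t2 : ℝ) :
    IntervalIntegrable (fun θ => ‖wfun k θ z1 - wfun k θ z2‖) MeasureSpace.volume t1 t2 := by
  have hmeas : Measurable fun θ => ‖wfun k θ z1 - wfun k θ z2‖ := by
    apply Measurable.norm
    apply Measurable.sub <;>
    · unfold wfun
      apply Measurable.of_discrete.comp
      apply Measurable.floor
      apply Measurable.const_mul
      apply Measurable.fract
      apply Measurable.div_const
      exact measurable_const.sub measurable_id
  rw [intervalIntegrable_iff]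
  haveI : IsFiniteMeasure (MeasureSpace.volume.restrict (Set.uIoc t1 t2)) := by
    constructor
    rw [MeasureTheory.Measure.restrict_apply_univ, Set.uIoc, Real.volume_Ioc]
    exact ENNReal.ofReal_lt_top
  apply MeasureTheory.Integrable.mono' (g := fun _ => (2:ℝ))
    (MeasureTheory.integrable_const _) hmeas.aestronglyMeasurable.restrict
  filter_upwards with θ
  rw [Real.norm_eq_abs, abs_of_nonneg (norm_nonneg _)]
  exact wnorm_le k θ z1 z2

lemma step_intInt (A B : ℝ) (w1 w2 : ℂ) (t1 t2 : ℝ) :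
    IntervalIntegrable (fun t => ‖(if A < t then 0 else w1) - (if B < t then 0 else w2)‖)
      MeasureSpace.volume t1 t2 := by
  have hmeas : Measurable fun t => ‖(if A < t then 0 else w1) - (if B < t then 0 else w2)‖ := by
    apply Measurable.norm
    apply Measurable.sub <;>
      exact Measurable.ite (measurableSet_lt measurable_const measurable_id)
        measurable_const measurable_const
  rw [intervalIntegrable_iff]
  haveI : IsFiniteMeasure (MeasureSpace.volume.restrict (Set.uIoc t1 t2)) := by
    constructor
    rw [MeasureTheory.Measure.restrict_apply_univ, Set.uIoc, Real.volume_Ioc]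
    exact ENNReal.ofReal_lt_top
  apply MeasureTheory.Integrable.mono' (g := fun _ => ‖w1‖ + ‖w2‖)
    (MeasureTheory.integrable_const _) hmeas.aestronglyMeasurable.restrict
  filter_upwards with t
  rw [Real.norm_eq_abs, abs_of_nonneg (norm_nonneg _)]
  calc ‖(if A < t then 0 else w1) - (if B < t then 0 else w2)‖
      ≤ ‖(if A < t then (0:ℂ) else w1)‖ + ‖(if B < t then (0:ℂ) else w2)‖ := norm_sub_le _ _
    _ ≤ ‖w1‖ + ‖w2‖ := by
        apply add_le_add <;> split <;> simp [norm_nonneg]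

lemma Y_sqrt_eq (k : ℕ) (t θ : ℝ) (z : ℂ) :
    Y k (Real.sqrt t) θ z = if ‖z‖^2 < t then 0 else wfun k θ z := by
  unfold Y wfun xi
  simp only [Real.lt_sqrt (norm_nonneg z)]

lemma inner_integral (k : ℕ) (θ : ℝ) (z1 z2 : ℂ) (h12 : ‖z1‖ ≤ ‖z2‖) (h2 : ‖z2‖ ≤ 1) :
    ∫ t in (0:ℝ)..1, ‖Y k (Real.sqrt t) θ z1 - Y k (Real.sqrt t) θ z2‖ =
      ‖z1‖^2 * ‖wfun k θ z1 - wfun k θ z2‖ + (‖z2‖^2 - ‖z1‖^2) := by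
  have hr1 : (0:ℝ) ≤ ‖z1‖ := norm_nonneg _
  have hr2 : (0:ℝ) ≤ ‖z2‖ := norm_nonneg _
  set A := ‖z1‖^2 with hA
  set B := ‖z2‖^2 with hB
  have hA0 : 0 ≤ A := by positivity
  have hAB : A ≤ B := by rw [hA, hB]; nlinarith
  have hB1 : B ≤ 1 := by rw [hB]; nlinarith
  set w1 := wfun k θ z1
  set w2 := wfun k θ z2
  have hint : ∀ t : ℝ, ‖Y k (Real.sqrt t) θ z1 - Y k (Real.sqrt t) θ z2‖ =
      ‖(if A < t then 0 else w1) - (if B < t then 0 else w2)‖ := by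
    intro t
    rw [Y_sqrt_eq, Y_sqrt_eq]
  simp_rw [hint]
  have hsplit : ∫ t in (0:ℝ)..1, ‖(if A < t then 0 else w1) - (if B < t then 0 else w2)‖ =
      (∫ t in (0:ℝ)..A, ‖(if A < t then 0 else w1) - (if B < t then 0 else w2)‖) +
      (∫ t in A..B, ‖(if A < t then 0 else w1) - (if B < t then 0 else w2)‖) +
      (∫ t in B..(1:ℝ), ‖(if A < t then 0 else w1) - (if B < t then 0 else w2)‖) := by
    rw [integral_add_adjacent_intervals (step_intInt A B w1 w2 0 A) (step_intInt A B w1 w2 A B),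
      integral_add_adjacent_intervals (step_intInt A B w1 w2 0 B) (step_intInt A B w1 w2 B 1)]
  have hP1 : ∫ t in (0:ℝ)..A, ‖(if A < t then 0 else w1) - (if B < t then 0 else w2)‖
      = A * ‖w1 - w2‖ := by
    rw [integral_congr (g := fun _ => ‖w1 - w2‖), intervalIntegral.integral_const, smul_eq_mul,
      sub_zero]
    intro t ht
    beta_reduce
    rw [Set.uIcc_of_le hA0] at ht
    rw [if_neg (by push_neg; exact ht.2), if_neg (by push_neg; exact le_trans ht.2 hAB)]
  have hP2 : ∫ t in A..B, ‖(if A < t then 0 else w1) - (if B < t then 0 else w2)‖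
      = B - A := by
    rw [intervalIntegral.integral_congr_ae (g := fun _ => (1:ℝ))]
    · rw [intervalIntegral.integral_const, smul_eq_mul, mul_one]
    filter_upwards with t ht
    beta_reduce
    rw [Set.uIoc_of_le hAB] at ht
    rw [if_pos ht.1, if_neg (by push_neg; exact ht.2), zero_sub, norm_neg]
    exact norm_wfun k θ z2
  have hP3 : ∫ t in B..(1:ℝ), ‖(if A < t then 0 else w1) - (if B < t then 0 else w2)‖
      = 0 := by
    rw [intervalIntegral.integral_congr_ae (g := fun _ => (0:ℝ))]
    · simp
    filter_upwards with t ht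
    beta_reduce
    rw [Set.uIoc_of_le hB1] at ht
    rw [if_pos (lt_of_le_of_lt hAB ht.1), if_pos ht.1, sub_self, norm_zero]
  rw [hsplit, hP1, hP2, hP3]
  ring

lemma main_aux (k : ℕ) (hk : 1 ≤ k) (z1 z2 : ℂ) (h1 : ‖z1‖ ≤ 1) (h2 : ‖z2‖ ≤ 1)
    (h12 : ‖z1‖ ≤ ‖z2‖) :
    (1 / (2 * Real.pi)) *
        ∫ θ in (0:ℝ)..(2 * Real.pi), ∫ t in (0:ℝ)..1,
          ‖Y k (Real.sqrt t) θ z1 - Y k (Real.sqrt t) θ z2‖ ≤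
      2 * ‖z1 - z2‖ * (‖z1‖ + ‖z2‖) := by
  have hpi := Real.pi_pos
  have hk0 : k ≠ 0 := by omega
  have hkR : (0:ℝ) < k := by exact_mod_cast Nat.pos_of_ne_zero hk0
  have hr1 : (0:ℝ) ≤ ‖z1‖ := norm_nonneg _
  have hr2 : (0:ℝ) ≤ ‖z2‖ := norm_nonneg _
  have hN : (0:ℝ) ≤ ‖z1 - z2‖ := norm_nonneg _
  set a1 := (k:ℝ) * Complex.arg z1 / (2 * Real.pi) with ha1
  set a2 := (k:ℝ) * Complex.arg z2 / (2 * Real.pi) with ha2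
  -- rewrite the inner integral
  rw [integral_congr (g := fun θ =>
      ‖z1‖^2 * ‖wfun k θ z1 - wfun k θ z2‖ + (‖z2‖^2 - ‖z1‖^2))
    (fun θ _ => inner_integral k θ z1 z2 h12 h2)]
  rw [integral_add ((wnorm_intInt k z1 z2 0 (2*Real.pi)).const_mul (‖z1‖^2))
    intervalIntegrable_const]
  rw [intervalIntegral.integral_const_mul, intervalIntegral.integral_const, smul_eq_mul,
    sub_zero]
  rw [integral_wnorm k hk z1 z2]
  -- the key bound on the hfun integral
  have hhle : ∫ u in (0:ℝ)..1, hfun k a1 a2 u ≤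
      2 * |Real.sin ((Complex.arg z1 - Complex.arg z2)/2)| := by
    have := integral_hfun_le k hk a1 a2
    rw [show Real.pi * (a1 - a2) / k = (Complex.arg z1 - Complex.arg z2)/2 by
      rw [ha1, ha2]; field_simp] at this
    exact this
  have hh0 : 0 ≤ ∫ u in (0:ℝ)..1, hfun k a1 a2 u :=
    intervalIntegral.integral_nonneg (by norm_num) (fun u _ => hfun_nonneg k a1 a2 u)
  set H := ∫ u in (0:ℝ)..1, hfun k a1 a2 u
  set S := |Real.sin ((Complex.arg z1 - Complex.arg z2)/2)| with hS
  -- chord bound: 2 * (r1 r2) * S ≤ (r1 + r2)/2 * N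
  have hchord : 2 * (‖z1‖ * ‖z2‖) * S ≤ (‖z1‖ + ‖z2‖) / 2 * ‖z1 - z2‖ := by
    have hc := chord z1 z2
    have hS2 : S^2 = Real.sin ((Complex.arg z1 - Complex.arg z2)/2)^2 := sq_abs _
    apply le_of_pow_le_pow_left₀ (two_ne_zero) (by positivity)
    calc (2 * (‖z1‖ * ‖z2‖) * S)^2 = (‖z1‖ * ‖z2‖) * ((4 * (‖z1‖*‖z2‖) * S^2)) := by ring
      _ ≤ (‖z1‖ * ‖z2‖) * ‖z1 - z2‖^2 := by
          apply mul_le_mul_of_nonneg_left _ (by positivity)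
          rw [hS2]; exact hc
      _ ≤ ((‖z1‖ + ‖z2‖)/2)^2 * ‖z1 - z2‖^2 := by
          apply mul_le_mul_of_nonneg_right _ (by positivity)
          nlinarith [sq_nonneg (‖z1‖ - ‖z2‖)]
      _ = ((‖z1‖ + ‖z2‖) / 2 * ‖z1 - z2‖)^2 := by ring
  -- radial bound
  have hrad : ‖z2‖^2 - ‖z1‖^2 ≤ ‖z1 - z2‖ * (‖z1‖ + ‖z2‖) := by
    have h := norm_sub_norm_le z2 z1
    rw [norm_sub_rev] at h
    nlinarith
  have hAH : ‖z1‖^2 * H ≤ (‖z1‖ + ‖z2‖)/2 * ‖z1 - z2‖ := by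
    calc ‖z1‖^2 * H ≤ ‖z1‖^2 * (2*S) := by
          apply mul_le_mul_of_nonneg_left hhle (by positivity)
      _ ≤ (‖z1‖*‖z2‖) * (2*S) := by
          apply mul_le_mul_of_nonneg_right _ (by positivity)
          nlinarith
      _ = 2 * (‖z1‖ * ‖z2‖) * S := by ring
      _ ≤ (‖z1‖ + ‖z2‖)/2 * ‖z1 - z2‖ := hchord
  calc (1 / (2 * Real.pi)) * (‖z1‖^2 * (2 * Real.pi * H) + 2*Real.pi * (‖z2‖^2 - ‖z1‖^2))
      = ‖z1‖^2 * H + (‖z2‖^2 - ‖z1‖^2) := by field_simp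
    _ ≤ (‖z1‖ + ‖z2‖)/2 * ‖z1 - z2‖ + ‖z1 - z2‖ * (‖z1‖ + ‖z2‖) := add_le_add hAH hrad
    _ ≤ 2 * ‖z1 - z2‖ * (‖z1‖ + ‖z2‖) := by nlinarith

theorem stmt_4 (k : ℕ) (hk : 1 ≤ k) (z1 z2 : ℂ) (h1 : ‖z1‖ ≤ 1) (h2 : ‖z2‖ ≤ 1) :
    (1 / (2 * Real.pi)) *
        ∫ θ in (0:ℝ)..(2 * Real.pi), ∫ t in (0:ℝ)..1,
          ‖Y k (Real.sqrt t) θ z1 - Y k (Real.sqrt t) θ z2‖ ≤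
      2 * ‖z1 - z2‖ * (‖z1‖ + ‖z2‖) := by
  rcases le_total ‖z1‖ ‖z2‖ with h12 | h12
  · exact main_aux k hk z1 z2 h1 h2 h12
  · have h := main_aux k hk z2 z1 h2 h1 h12
    have e : ∀ θ t : ℝ, ‖Y k (Real.sqrt t) θ z2 - Y k (Real.sqrt t) θ z1‖ =
        ‖Y k (Real.sqrt t) θ z1 - Y k (Real.sqrt t) θ z2‖ := fun θ t => norm_sub_rev _ _
    simp_rw [e] at h
    calc (1 / (2 * Real.pi)) *
          ∫ θ in (0:ℝ)..(2 * Real.pi), ∫ t in (0:ℝ)..1,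
            ‖Y k (Real.sqrt t) θ z1 - Y k (Real.sqrt t) θ z2‖
        ≤ 2 * ‖z2 - z1‖ * (‖z2‖ + ‖z1‖) := h
      _ = 2 * ‖z1 - z2‖ * (‖z1‖ + ‖z2‖) := by rw [norm_sub_rev]; ring
end
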